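/- For every $s$ with $\tfrac{1}{2} \leq s \leq \tfrac{2}{3}$ there exists a constant $C > 0$ such that the following holds. Let $n_1, n_2, n_3$ be nonzero integers with $n_1 + n_2 \neq 0$, $|n_1 + n_2| \leq \tfrac{1}{8}|n_1|$, and $|n_3| \leq \tfrac{1}{8}|n_1|$, and set $n := n_1 + n_2 + n_3$ and $H_3 := (n_1 + n_2)(n_2 + n_3)(n_3 + n_1)$. Then $\langle n\rangle^{1/3}\, \langle n_1\rangle^{s}\, \langle n_2\rangle^{s} \;\leq\; C\, \langle n\rangle^{s}\, \langle n_3\rangle^{1-s}\, \langle H_3\rangle^{2/3}$. -/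
import Mathlib
set_option maxHeartbeats 1000000

noncomputable def jb (m : ℤ) : ℝ := Real.sqrt (1 + (m : ℝ) ^ 2)

lemma jb_one_le (m : ℤ) : (1:ℝ) ≤ jb m := by
  have : (1:ℝ) = Real.sqrt 1 := (Real.sqrt_one).symm
  rw [this, jb]
  exact Real.sqrt_le_sqrt (by nlinarith [sq_nonneg ((m:ℝ))])

lemma jb_nonneg (m : ℤ) : (0:ℝ) ≤ jb m := le_trans zero_le_one (jb_one_le m)

lemma jb_pos (m : ℤ) : (0:ℝ) < jb m := lt_of_lt_of_le zero_lt_one (jb_one_le m)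

lemma abs_le_jb (m : ℤ) : |(m:ℝ)| ≤ jb m := by
  rw [jb, ← Real.sqrt_sq_eq_abs]
  exact Real.sqrt_le_sqrt (by nlinarith [sq_nonneg ((m:ℝ))])

lemma jb_le_one_add_abs (m : ℤ) : jb m ≤ 1 + |(m:ℝ)| := by
  rw [jb]
  have h : (1:ℝ) + (m:ℝ)^2 ≤ (1 + |(m:ℝ)|)^2 := by
    nlinarith [abs_nonneg ((m:ℝ)), sq_abs ((m:ℝ))]
  calc Real.sqrt (1 + (m:ℝ)^2) ≤ Real.sqrt ((1 + |(m:ℝ)|)^2) := Real.sqrt_le_sqrt h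
    _ = 1 + |(m:ℝ)| := Real.sqrt_sq (by positivity)

theorem stmt_17 :
    ∀ s : ℝ, 1/2 ≤ s → s ≤ 2/3 →
      ∃ C : ℝ, 0 < C ∧ ∀ n₁ n₂ n₃ : ℤ, n₁ ≠ 0 → n₂ ≠ 0 → n₃ ≠ 0 → n₁ + n₂ ≠ 0 →
        8 * |n₁ + n₂| ≤ |n₁| → 8 * |n₃| ≤ |n₁| →
        jb (n₁ + n₂ + n₃) ^ ((1:ℝ)/3) * jb n₁ ^ s * jb n₂ ^ s
          ≤ C * jb (n₁ + n₂ + n₃) ^ s * jb n₃ ^ (1 - s)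
              * jb ((n₁ + n₂) * (n₂ + n₃) * (n₃ + n₁)) ^ ((2:ℝ)/3) := by
  intro s hs1 hs2
  refine ⟨8, by norm_num, ?_⟩
  intro n₁ n₂ n₃ h1 h2 h3 h12 hb1 hb2
  set N : ℤ := n₁ + n₂ + n₃ with hN
  set H : ℤ := (n₁ + n₂) * (n₂ + n₃) * (n₃ + n₁) with hH
  set a : ℝ := |(n₁:ℝ)| with ha
  -- cast hypotheses
  have hb1' : 8 * |(n₁:ℝ) + n₂| ≤ a := by
    show 8 * |(n₁:ℝ) + n₂| ≤ |(n₁:ℝ)|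
    exact_mod_cast hb1
  have hb2' : 8 * |(n₃:ℝ)| ≤ a := by
    show 8 * |(n₃:ℝ)| ≤ |(n₁:ℝ)|
    exact_mod_cast hb2
  have h12' : (1:ℝ) ≤ |(n₁:ℝ) + n₂| := by exact_mod_cast Int.one_le_abs h12
  have ha8 : (8:ℝ) ≤ a := le_trans (by linarith) hb1'
  have ha0 : (0:ℝ) < a := by linarith
  -- size bounds
  have hjn1 : jb n₁ ≤ 2 * a := le_trans (jb_le_one_add_abs n₁) (by rw [← ha]; linarith)
  have hn2abs : |(n₂:ℝ)| ≤ a + a/8 := by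
    have : |(n₂:ℝ)| ≤ |(n₁:ℝ) + n₂| + |(n₁:ℝ)| := by
      have := abs_sub_abs_le_abs_sub ((n₂:ℝ)) (-(n₁:ℝ))
      simp only [abs_neg] at this
      have h' : (n₂:ℝ) - -(n₁:ℝ) = (n₁:ℝ) + n₂ := by ring
      rw [h'] at this
      linarith
    linarith
  have hjn2 : jb n₂ ≤ 2 * a := le_trans (jb_le_one_add_abs n₂) (by linarith)
  -- lower bound on |H|
  have hn23 : 3 * a / 4 ≤ |(n₂:ℝ) + n₃| := by
    have h1 : a - a/8 ≤ |(n₂:ℝ)| := by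
      have := abs_sub_abs_le_abs_sub ((n₁:ℝ)) (-(n₂:ℝ))
      simp only [abs_neg] at this
      have h' : (n₁:ℝ) - -(n₂:ℝ) = (n₁:ℝ) + n₂ := by ring
      rw [h'] at this
      linarith
    have h2 : |(n₂:ℝ)| - |(n₃:ℝ)| ≤ |(n₂:ℝ) + n₃| := by
      have := abs_sub_abs_le_abs_sub ((n₂:ℝ)) (-(n₃:ℝ))
      simp only [abs_neg] at this
      have h' : (n₂:ℝ) - -(n₃:ℝ) = (n₂:ℝ) + n₃ := by ring
      rw [h'] at this
      linarith
    linarith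
  have hn31 : 3 * a / 4 ≤ |(n₃:ℝ) + n₁| := by
    have h2 : |(n₁:ℝ)| - |(n₃:ℝ)| ≤ |(n₃:ℝ) + n₁| := by
      have := abs_sub_abs_le_abs_sub ((n₁:ℝ)) (-(n₃:ℝ))
      simp only [abs_neg] at this
      have h' : (n₁:ℝ) - -(n₃:ℝ) = (n₃:ℝ) + n₁ := by ring
      rw [h'] at this
      linarith
    linarith
  have hHabs : a ^ 2 / 2 ≤ |(H:ℝ)| := by
    have : |(H:ℝ)| = |(n₁:ℝ) + n₂| * |(n₂:ℝ) + n₃| * |(n₃:ℝ) + n₁| := by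
      rw [hH]; push_cast; rw [abs_mul, abs_mul]
    rw [this]
    have p1 : 1 * (3 * a / 4) ≤ |(n₁:ℝ) + n₂| * |(n₂:ℝ) + n₃| :=
      mul_le_mul h12' hn23 (by linarith) (abs_nonneg _)
    have p2 : (1 * (3 * a / 4)) * (3 * a / 4) ≤ (|(n₁:ℝ) + n₂| * |(n₂:ℝ) + n₃|) * |(n₃:ℝ) + n₁| :=
      mul_le_mul p1 hn31 (by linarith) (mul_nonneg (abs_nonneg _) (abs_nonneg _))
    nlinarith [sq_nonneg a]
  have hjH : a ^ 2 / 2 ≤ jb H := le_trans hHabs (abs_le_jb H)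
  -- main chain
  have h13s : (1:ℝ)/3 ≤ s := by linarith
  have step1 : jb N ^ ((1:ℝ)/3) ≤ jb N ^ s :=
    Real.rpow_le_rpow_of_exponent_le (jb_one_le N) h13s
  have step2 : jb n₁ ^ s ≤ (2*a) ^ s :=
    Real.rpow_le_rpow (jb_nonneg n₁) hjn1 (by linarith)
  have step3 : jb n₂ ^ s ≤ (2*a) ^ s :=
    Real.rpow_le_rpow (jb_nonneg n₂) hjn2 (by linarith)
  have h2a0 : (0:ℝ) < 2*a := by linarith
  have hprod : (2*a) ^ s * (2*a) ^ s = (2*a) ^ (2*s) := by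
    rw [← Real.rpow_add h2a0]; ring_nf
  have step4 : (2*a) ^ (2*s) ≤ (2*a) ^ ((4:ℝ)/3) :=
    Real.rpow_le_rpow_of_exponent_le (by linarith) (by linarith)
  have step5 : (2*a) ^ ((4:ℝ)/3) ≤ 8 * jb H ^ ((2:ℝ)/3) := by
    have e1 : (2*a) ^ ((4:ℝ)/3) = ((2*a)^2 : ℝ) ^ ((2:ℝ)/3) := by
      rw [← Real.rpow_natCast ((2*a)) 2, ← Real.rpow_mul (le_of_lt h2a0)]
      norm_num
    have e2 : ((2*a)^2 : ℝ) ≤ 8 * jb H := by nlinarith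
    rw [e1]
    calc ((2*a)^2 : ℝ) ^ ((2:ℝ)/3) ≤ (8 * jb H) ^ ((2:ℝ)/3) :=
          Real.rpow_le_rpow (by positivity) e2 (by norm_num)
      _ = 8 ^ ((2:ℝ)/3) * jb H ^ ((2:ℝ)/3) := Real.mul_rpow (by norm_num) (jb_nonneg H)
      _ ≤ 8 * jb H ^ ((2:ℝ)/3) := by
          have h8 : (8:ℝ) ^ ((2:ℝ)/3) ≤ 8 ^ (1:ℝ) :=
            Real.rpow_le_rpow_of_exponent_le (by norm_num) (by norm_num)
          rw [Real.rpow_one] at h8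
          have := Real.rpow_nonneg (jb_nonneg H) ((2:ℝ)/3)
          nlinarith
  have hn3 : (1:ℝ) ≤ jb n₃ ^ (1-s) := by
    have := Real.rpow_le_rpow zero_le_one (jb_one_le n₃) (by linarith : (0:ℝ) ≤ 1-s)
    rwa [Real.one_rpow] at this
  have hNs : (0:ℝ) ≤ jb N ^ s := Real.rpow_nonneg (jb_nonneg N) s
  have hHs : (0:ℝ) ≤ jb H ^ ((2:ℝ)/3) := Real.rpow_nonneg (jb_nonneg H) _
  have h2as : (0:ℝ) ≤ (2*a) ^ s := Real.rpow_nonneg (le_of_lt h2a0) s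
  calc jb N ^ ((1:ℝ)/3) * jb n₁ ^ s * jb n₂ ^ s
      ≤ jb N ^ s * (2*a) ^ s * (2*a) ^ s := by
        have hn1s : (0:ℝ) ≤ jb n₁ ^ s := Real.rpow_nonneg (jb_nonneg n₁) s
        have hn2s : (0:ℝ) ≤ jb n₂ ^ s := Real.rpow_nonneg (jb_nonneg n₂) s
        have t1 : jb N ^ ((1:ℝ)/3) * jb n₁ ^ s ≤ jb N ^ s * (2*a) ^ s :=
          mul_le_mul step1 step2 hn1s hNs
        exact mul_le_mul t1 step3 hn2s (mul_nonneg hNs h2as)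
    _ = jb N ^ s * (2*a) ^ (2*s) := by rw [mul_assoc, hprod]
    _ ≤ jb N ^ s * (2*a) ^ ((4:ℝ)/3) := by
        exact mul_le_mul_of_nonneg_left step4 hNs
    _ ≤ jb N ^ s * (8 * jb H ^ ((2:ℝ)/3)) := mul_le_mul_of_nonneg_left step5 hNs
    _ = 8 * jb N ^ s * 1 * jb H ^ ((2:ℝ)/3) := by ring
    _ ≤ 8 * jb N ^ s * jb n₃ ^ (1-s) * jb H ^ ((2:ℝ)/3) := by
        refine mul_le_mul_of_nonneg_right ?_ hHs
        exact mul_le_mul_of_nonneg_left hn3 (by positivity)
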